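/- Let (e,h,f) be an sl₂-triple in Matrix (Fin n) (Fin n) ℂ. Consider the subspaces of pairs U₁ := {(A,B) : e*A = A*e ∧ e*B + B*e = 0} and U₂ := {(f*C - C*f, f*D + D*f) : C, D : Matrix (Fin n) (Fin n) ℂ}. Then U₁ ∩ U₂ = {(0,0)} and U₁ + U₂ is the whole space of pairs; i.e. every pair (A,B) of n×n complex matrices decomposes uniquely as a sum of an element of U₁ and an element of U₂. -/

import Mathlib

/-- The super-centralizer `g^E` of the odd element `E = (0, e)` in the pair model of
the queer Lie superalgebra `q(n)`: pairs `(A, B)` with `e*A = A*e` and `e*B + B*e = 0`. -/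
def centE {n : ℕ} (e : Matrix (Fin n) (Fin n) ℂ) :
    Set (Matrix (Fin n) (Fin n) ℂ × Matrix (Fin n) (Fin n) ℂ) :=
  {p | e * p.1 = p.1 * e ∧ e * p.2 + p.2 * e = 0}

/-- The subspace `Π[g, F]` in the pair model of `q(n)`, where `F = (0, f)` and `Π` is
the parity flip: pairs of the form `(f*C - C*f, f*D + D*f)`. -/
def piBracketF {n : ℕ} (f : Matrix (Fin n) (Fin n) ℂ) :
    Set (Matrix (Fin n) (Fin n) ℂ × Matrix (Fin n) (Fin n) ℂ) :=
  {p | ∃ C D : Matrix (Fin n) (Fin n) ℂ, p = (f * C - C * f, f * D + D * f)}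

open LinearMap

attribute [local instance 100] LieRing.ofAssociativeRing

section General

variable {V : Type*} [AddCommGroup V] [Module ℂ V] [FiniteDimensional ℂ V]

variable {V : Type*} [AddCommGroup V] [Module ℂ V] [FiniteDimensional ℂ V]

/-- `[H, F^m] = -2m F^m` given `[H,F] = -2F`. -/
lemma lie_H_pow (H F : Module.End ℂ V) (hHF : H * F - F * H = -((2:ℂ) • F)) (m : ℕ) :
    H * F ^ m - F ^ m * H = -(((2*m : ℂ)) • F ^ m) := by
  induction m with
  | zero => simp
  | succ m ih =>
    rw [show F ^ (m+1) = F * F ^ m from pow_succ' F m]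
    have : H * (F * F ^ m) - F * F ^ m * H
        = (H * F - F * H) * F ^ m + F * (H * F ^ m - F ^ m * H) := by noncomm_ring
    rw [this, ih, hHF]
    push_cast
    simp only [smul_mul_assoc, mul_smul_comm, neg_mul, mul_neg]
    module

/-- An endomorphism `F` with `[H,F] = -2F` is nilpotent (char 0, fin dim). -/
lemma nilpotent_of_lie (H F : Module.End ℂ V) (hHF : H * F - F * H = -((2:ℂ) • F)) :
    IsNilpotent F := by
  by_contra hF
  have hFk : ∀ m : ℕ, F ^ m ≠ 0 := fun m h => hF ⟨m, h⟩
  set T : Module.End ℂ (Module.End ℂ V) := LinearMap.mulLeft ℂ H - LinearMap.mulRight ℂ H with hT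
  have heig : ∀ m : ℕ, T.HasEigenvector (-(2*m : ℂ)) (F ^ m) := by
    intro m
    rw [Module.End.hasEigenvector_iff, Module.End.mem_eigenspace_iff]
    refine ⟨?_, hFk m⟩
    have := lie_H_pow H F hHF m
    simp only [hT, LinearMap.sub_apply, LinearMap.mulLeft_apply, LinearMap.mulRight_apply]
    rw [this]
    module
  have hs : (Set.range fun m : ℕ => -(2*m : ℂ)).Infinite := by
    rw [Set.infinite_range_iff (fun a b hab => by
      field_simp at hab; exact_mod_cast neg_inj.mp hab)]
    infer_instance
  exact hs ((T.eigenvectors_linearIndependent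
    (Set.range fun m : ℕ => -(2*m : ℂ))
    (fun μ => F ^ Classical.choose μ.2)
    (fun μ => by simpa [Classical.choose_spec μ.2] using heig (Classical.choose μ.2))).finite)

/-- `[E, F^{m+1}] = (m+1) F^m H - m(m+1) F^m` applied to a vector. -/
lemma lie_E_pow_apply (E H F : Module.End ℂ V)
    (hHF : H * F - F * H = -((2:ℂ) • F)) (hEF : E * F - F * E = H) (m : ℕ) (v : V) :
    E ((F ^ (m+1)) v) = (F ^ (m+1)) (E v) + ((m+1 : ℂ)) • (F ^ m) (H v)
      - ((m * (m+1) : ℂ)) • (F ^ m) v := by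
  have hEFv : ∀ x : V, E (F x) = F (E x) + H x := by
    intro x
    have h := LinearMap.ext_iff.mp hEF x
    simp only [LinearMap.sub_apply, Module.End.mul_apply] at h
    rw [sub_eq_iff_eq_add] at h
    rw [h, add_comm]
  have hHFv : ∀ x : V, H (F x) = F (H x) - (2:ℂ) • F x := by
    intro x
    have h := LinearMap.ext_iff.mp hHF x
    simp only [LinearMap.sub_apply, Module.End.mul_apply, LinearMap.neg_apply,
      LinearMap.smul_apply] at h
    rw [sub_eq_iff_eq_add] at h
    rw [h, neg_add_eq_sub]
  induction m generalizing v with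
  | zero => simp [hEFv v]
  | succ m ih =>
    rw [pow_succ F (m+1), Module.End.mul_apply, ih (F v), hEFv v, hHFv v]
    simp only [map_add, map_sub, map_smul, pow_succ, Module.End.mul_apply]
    push_cast
    module

lemma sl2_inf (E H F : Module.End ℂ V)
    (hHE : H * E - E * H = (2:ℂ) • E) (hHF : H * F - F * H = -((2:ℂ) • F))
    (hEF : E * F - F * E = H) :
    LinearMap.ker E ⊓ LinearMap.range F = ⊥ := by
  rcases eq_or_ne H 0 with hH | hH
  · have hE : E = 0 := by
      have : (2:ℂ) • E = 0 := by rw [← hHE, hH]; noncomm_ring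
      simpa using this
    have hF : F = 0 := by
      have : -((2:ℂ) • F) = 0 := by rw [← hHF, hH]; noncomm_ring
      simpa using this
    rw [hF, LinearMap.range_zero, inf_bot_eq]
  -- main case
  set W := LinearMap.ker E ⊓ LinearMap.range F with hW
  by_contra hWne
  have hWH : ∀ x ∈ W, H x ∈ W := by
    intro x hx
    have hxE : E x = 0 := LinearMap.mem_ker.mp (Submodule.mem_inf.mp hx).1
    have hxF : x ∈ LinearMap.range F := (Submodule.mem_inf.mp hx).2
    rw [hW, Submodule.mem_inf]
    constructor
    · rw [LinearMap.mem_ker]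
      have h := LinearMap.ext_iff.mp hHE x
      simp only [LinearMap.sub_apply, Module.End.mul_apply, LinearMap.smul_apply] at h
      rw [hxE, map_zero] at h
      linear_combination (norm := module) -h
    · obtain ⟨y, hy⟩ := hxF
      have h := LinearMap.ext_iff.mp hHF y
      simp only [LinearMap.sub_apply, Module.End.mul_apply, LinearMap.neg_apply,
        LinearMap.smul_apply] at h
      rw [hy] at h
      refine ⟨H y - (2:ℂ) • y, ?_⟩
      rw [map_sub, map_smul]
      linear_combination (norm := module) -h - (2:ℂ) • hy
  have : Nontrivial ↥W := Submodule.nontrivial_iff_ne_bot.mpr hWne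
  obtain ⟨μ, hμ⟩ := Module.End.exists_eigenvalue (H.restrict hWH)
  obtain ⟨v, hv⟩ := hμ.exists_hasEigenvector
  have hx0 : (v : V) ≠ 0 := fun h => hv.right (Subtype.ext h)
  have hxH : H (v : V) = μ • (v : V) := by
    have := congrArg (Subtype.val) (hv.apply_eq_smul)
    simpa [LinearMap.restrict_coe_apply] using this
  have hxE : E (v : V) = 0 := LinearMap.mem_ker.mp (Submodule.mem_inf.mp v.2).1
  have hxF : (v : V) ∈ LinearMap.range F := (Submodule.mem_inf.mp v.2).2
  set x : V := (v : V)
  -- Lie theory: μ = n, string length facts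
  have t : IsSl2Triple H E F := by
    refine ⟨hH, ?_, ?_, ?_⟩
    · rw [Ring.lie_def, hEF]
    · rw [Ring.lie_def, hHE]; simp [two_smul]
    · rw [Ring.lie_def, hHF]; simp [two_smul]
  have P : t.HasPrimitiveVectorWith x μ := by
    refine ⟨hx0, ?_, ?_⟩
    · rw [lie_eq_smul, Module.End.smul_def, hxH]
    · rw [lie_eq_smul, Module.End.smul_def, hxE]
  have htoEnd : LieModule.toEnd ℂ (Module.End ℂ V) V F = F := by
    rw [LieModule.toEnd_module_end]; rfl
  obtain ⟨n, hn⟩ := P.exists_nat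
  have hxs0 : (F ^ n) x ≠ 0 := by
    have := P.pow_toEnd_f_ne_zero_of_eq_nat hn (le_refl n)
    rwa [htoEnd] at this
  have hFx : (F ^ (n+1)) x = 0 := by
    have := P.pow_toEnd_f_eq_zero_of_eq_nat hn
    rwa [htoEnd] at this
  set xs : V := (F ^ n) x with hxs
  have hFxs : F xs = 0 := by
    rw [hxs, ← Module.End.mul_apply, ← pow_succ']
    exact hFx
  have hHxs : H xs = (-(n:ℂ)) • xs := by
    have hh := P.lie_h_pow_toEnd_f n
    rw [htoEnd, lie_eq_smul, Module.End.smul_def, hn] at hh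
    show H ((F ^ n) x) = (-(n:ℂ)) • (F ^ n) x
    rw [hh]
    module
  -- descent: for every k there is w with F^(n+1+k) w a nonzero multiple of xs
  have key : ∀ k : ℕ, ∃ (w : V) (c : ℂ), c ≠ 0 ∧ (F ^ (n+1+k)) w = c • xs
      ∧ (F ^ (n+2+k)) w = 0 := by
    intro k
    induction k with
    | zero =>
      obtain ⟨y, hy⟩ := hxF
      refine ⟨y, 1, one_ne_zero, ?_, ?_⟩
      · rw [pow_succ, Module.End.mul_apply, hy, one_smul, hxs]
      · have h2 : n + 2 + 0 = (n+1) + 1 := by omega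
        rw [h2, pow_succ, Module.End.mul_apply, hy, hFx]
    | succ k ih =>
      obtain ⟨w, c, hc, h1, h2⟩ := ih
      set m := n + 1 + k with hm
      have hm1 : (F ^ (m+1)) w = 0 := by
        have h3 : n + 2 + k = m + 1 := by omega
        rwa [h3] at h2
      have hFmH : (F ^ m) (H w) = ((-(n:ℂ)) * c + (2*m:ℂ) * c) • xs := by
        have hop := LinearMap.ext_iff.mp (lie_H_pow H F hHF m) w
        simp only [LinearMap.sub_apply, Module.End.mul_apply, LinearMap.neg_apply,
          LinearMap.smul_apply] at hop
        rw [h1, map_smul, hHxs] at hop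
        linear_combination (norm := module) -hop
      have hEid := lie_E_pow_apply E H F hHF hEF m w
      rw [hm1, map_zero, hFmH, h1] at hEid
      set c' : ℂ := (↑m * (↑m+1) : ℂ) * c - ((↑m:ℂ)+1) * ((-(n:ℂ)) * c + (2*m:ℂ) * c) with hc'
      have hFEw : (F ^ (m+1)) (E w) = c' • xs := by
        rw [hc']
        linear_combination (norm := module) -hEid
      have hcne : c' ≠ 0 := by
        have hmn : (m:ℂ) = (n:ℂ) + 1 + (k:ℂ) := by rw [hm]; push_cast; ring
        have hrw : c' = -(((m:ℂ)+1) * ((k:ℂ)+1) * c) := by rw [hc', hmn]; ring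
        have ha : ((m:ℂ)+1) ≠ 0 := by
          have : ((m+1:ℕ):ℂ) ≠ 0 := Nat.cast_ne_zero.mpr (by omega)
          push_cast at this; exact this
        have hb : ((k:ℂ)+1) ≠ 0 := by
          have : ((k+1:ℕ):ℂ) ≠ 0 := Nat.cast_ne_zero.mpr (by omega)
          push_cast at this; exact this
        rw [hrw, neg_ne_zero]
        exact mul_ne_zero (mul_ne_zero ha hb) hc
      refine ⟨E w, c', hcne, ?_, ?_⟩
      · have hidx : n + 1 + (k+1) = m + 1 := by omega
        rw [hidx, hFEw]
      · have hidx : n + 2 + (k+1) = (m+1) + 1 := by omega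
        rw [hidx, pow_succ', Module.End.mul_apply, hFEw, map_smul, hFxs, smul_zero]
  obtain ⟨N, hN⟩ := nilpotent_of_lie H F hHF
  obtain ⟨w, c, hc, h1, _⟩ := key N
  have hzero : (F ^ (n+1+N)) w = 0 := by
    rw [pow_add, Module.End.mul_apply, hN]
    simp
  rw [hzero] at h1
  exact hxs0 (by simpa [hxs] using (smul_eq_zero.mp h1.symm).resolve_left hc)

lemma sl2_sup (E H F : Module.End ℂ V)
    (hHE : H * E - E * H = (2:ℂ) • E) (hHF : H * F - F * H = -((2:ℂ) • F))
    (hEF : E * F - F * E = H) :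
    LinearMap.ker E ⊔ LinearMap.range F = ⊤ := by
  have i1 := sl2_inf E H F hHE hHF hEF
  have i2 : LinearMap.ker F ⊓ LinearMap.range E = ⊥ := by
    refine sl2_inf F (-H) E ?_ ?_ ?_
    · rw [show (-H) * F - F * (-H) = -(H * F - F * H) by noncomm_ring, hHF, neg_neg]
    · rw [show (-H) * E - E * (-H) = -(H * E - E * H) by noncomm_ring, hHE]
    · rw [show F * E - E * F = -(E * F - F * E) by noncomm_ring, hEF]
  have r1 := LinearMap.finrank_range_add_finrank_ker E
  have r2 := LinearMap.finrank_range_add_finrank_ker F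
  have s1 := Submodule.finrank_sup_add_finrank_inf_eq (LinearMap.ker E) (LinearMap.range F)
  have s2 := Submodule.finrank_sup_add_finrank_inf_eq (LinearMap.ker F) (LinearMap.range E)
  rw [i1, finrank_bot, add_zero] at s1
  rw [i2, finrank_bot, add_zero] at s2
  have b1 : Module.finrank ℂ ↥(LinearMap.ker E ⊔ LinearMap.range F) ≤ Module.finrank ℂ V :=
    Submodule.finrank_le _
  have b2 : Module.finrank ℂ ↥(LinearMap.ker F ⊔ LinearMap.range E) ≤ Module.finrank ℂ V :=
    Submodule.finrank_le _
  apply Submodule.eq_top_of_finrank_eq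
  omega

/-- Splitting of a sum against a trivially-intersecting pair of submodules. -/
lemma decomp_unique {S T : Submodule ℂ V} (hST : S ⊓ T = ⊥)
    {a a' b b' : V} (ha : a ∈ S) (ha' : a' ∈ S) (hb : b ∈ T) (hb' : b' ∈ T)
    (hsum : a + b = a' + b') : a = a' ∧ b = b' := by
  have hmem : a - a' ∈ S ⊓ T := by
    constructor
    · exact Submodule.sub_mem S ha ha'
    · have : a - a' = b' - b := by
        rw [sub_eq_sub_iff_add_eq_add]
        linear_combination (norm := abel) hsum
      rw [this]
      exact Submodule.sub_mem T hb' hb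
  rw [hST, Submodule.mem_bot, sub_eq_zero] at hmem
  refine ⟨hmem, ?_⟩
  rw [hmem] at hsum
  exact add_left_cancel hsum

end General

section RingIds

variable {R : Type*} [Ring R]

lemma ringID1 (a b X : R) :
    a * (b * X - X * b) - (b * X - X * b) * a - (b * (a * X - X * a) - (a * X - X * a) * b)
      = (a * b - b * a) * X - X * (a * b - b * a) := by noncomm_ring

lemma ringID2 (a b X : R) :
    a * (b * X + X * b) - (b * X + X * b) * a - (b * (a * X - X * a) + (a * X - X * a) * b)
      = (a * b - b * a) * X + X * (a * b - b * a) := by noncomm_ring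

lemma ringID3 (a b X : R) :
    a * (b * X + X * b) + (b * X + X * b) * a - (b * (a * X + X * a) + (a * X + X * a) * b)
      = (a * b - b * a) * X - X * (a * b - b * a) := by noncomm_ring

end RingIds

/-- For an `sl₂`-triple `(e, h, f)`, we have `g = g^E ⊕ Π[g, F]` in the pair model of
`q(n)`: the two subspaces intersect trivially and every pair decomposes uniquely as
a sum of an element of `U₁ = g^E` and an element of `U₂ = Π[g, F]`. -/
theorem stmt4 (n : ℕ) (e h f : Matrix (Fin n) (Fin n) ℂ)
    (h1 : h * e - e * h = 2 • e) (h2 : h * f - f * h = -(2 • f))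
    (h3 : e * f - f * e = h) :
    centE e ∩ piBracketF f = {(0, 0)} ∧
    ∀ p : Matrix (Fin n) (Fin n) ℂ × Matrix (Fin n) (Fin n) ℂ,
      ∃! q : (Matrix (Fin n) (Fin n) ℂ × Matrix (Fin n) (Fin n) ℂ) ×
             (Matrix (Fin n) (Fin n) ℂ × Matrix (Fin n) (Fin n) ℂ),
        q.1 ∈ centE e ∧ q.2 ∈ piBracketF f ∧ p = q.1 + q.2 := by
  -- ℂ-smul versions of the hypotheses
  have h1' : h * e - e * h = (2:ℂ) • e := by
    rw [h1]
    rw [show ((2:ℂ) • e) = ((2:ℕ):ℂ) • e by norm_num]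
    rw [Nat.cast_smul_eq_nsmul]
  have h2' : h * f - f * h = -((2:ℂ) • f) := by
    rw [h2]
    rw [show ((2:ℂ) • f) = ((2:ℕ):ℂ) • f by norm_num]
    rw [Nat.cast_smul_eq_nsmul]
  -- the three operators of the even triple and the two odd operators
  set E₁ : Module.End ℂ (Matrix (Fin n) (Fin n) ℂ) := LinearMap.mulLeft ℂ e - LinearMap.mulRight ℂ e with hE₁
  set H₁ : Module.End ℂ (Matrix (Fin n) (Fin n) ℂ) := LinearMap.mulLeft ℂ h - LinearMap.mulRight ℂ h with hH₁
  set F₁ : Module.End ℂ (Matrix (Fin n) (Fin n) ℂ) := LinearMap.mulLeft ℂ f - LinearMap.mulRight ℂ f with hF₁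
  set E₂ : Module.End ℂ (Matrix (Fin n) (Fin n) ℂ) := LinearMap.mulLeft ℂ e + LinearMap.mulRight ℂ e with hE₂
  set F₂ : Module.End ℂ (Matrix (Fin n) (Fin n) ℂ) := LinearMap.mulLeft ℂ f + LinearMap.mulRight ℂ f with hF₂
  have hE₁app : ∀ X : Matrix (Fin n) (Fin n) ℂ, E₁ X = e * X - X * e := fun X => rfl
  have hH₁app : ∀ X : Matrix (Fin n) (Fin n) ℂ, H₁ X = h * X - X * h := fun X => rfl
  have hF₁app : ∀ X : Matrix (Fin n) (Fin n) ℂ, F₁ X = f * X - X * f := fun X => rfl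
  have hE₂app : ∀ X : Matrix (Fin n) (Fin n) ℂ, E₂ X = e * X + X * e := fun X => rfl
  have hF₂app : ∀ X : Matrix (Fin n) (Fin n) ℂ, F₂ X = f * X + X * f := fun X => rfl
  -- even triple relations
  have rel1 : H₁ * E₁ - E₁ * H₁ = (2:ℂ) • E₁ := by
    apply LinearMap.ext; intro X
    simp only [LinearMap.sub_apply, Module.End.mul_apply, LinearMap.smul_apply,
      hE₁app, hH₁app]
    rw [ringID1 h e X, h1']
    simp only [smul_mul_assoc, mul_smul_comm]
    module
  have rel2 : H₁ * F₁ - F₁ * H₁ = -((2:ℂ) • F₁) := by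
    apply LinearMap.ext; intro X
    simp only [LinearMap.sub_apply, Module.End.mul_apply, LinearMap.smul_apply,
      LinearMap.neg_apply, hF₁app, hH₁app]
    rw [ringID1 h f X, h2']
    simp only [neg_mul, mul_neg, smul_mul_assoc, mul_smul_comm]
    module
  have rel3 : E₁ * F₁ - F₁ * E₁ = H₁ := by
    apply LinearMap.ext; intro X
    simp only [LinearMap.sub_apply, Module.End.mul_apply, hE₁app, hF₁app, hH₁app]
    rw [ringID1 e f X, h3]
  -- odd triple relations
  have rel4 : H₁ * E₂ - E₂ * H₁ = (2:ℂ) • E₂ := by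
    apply LinearMap.ext; intro X
    simp only [LinearMap.sub_apply, Module.End.mul_apply, LinearMap.smul_apply,
      hE₂app, hH₁app]
    rw [ringID2 h e X, h1']
    simp only [smul_mul_assoc, mul_smul_comm]
    module
  have rel5 : H₁ * F₂ - F₂ * H₁ = -((2:ℂ) • F₂) := by
    apply LinearMap.ext; intro X
    simp only [LinearMap.sub_apply, Module.End.mul_apply, LinearMap.smul_apply,
      LinearMap.neg_apply, hF₂app, hH₁app]
    rw [ringID2 h f X, h2']
    simp only [neg_mul, mul_neg, smul_mul_assoc, mul_smul_comm]
    module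
  have rel6 : E₂ * F₂ - F₂ * E₂ = H₁ := by
    apply LinearMap.ext; intro X
    simp only [LinearMap.sub_apply, Module.End.mul_apply, hE₂app, hF₂app, hH₁app]
    rw [ringID3 e f X, h3]
  -- the decompositions
  have inf1 := sl2_inf E₁ H₁ F₁ rel1 rel2 rel3
  have sup1 := sl2_sup E₁ H₁ F₁ rel1 rel2 rel3
  have inf2 := sl2_inf E₂ H₁ F₂ rel4 rel5 rel6
  have sup2 := sl2_sup E₂ H₁ F₂ rel4 rel5 rel6
  -- membership translations
  have memker1 : ∀ A : Matrix (Fin n) (Fin n) ℂ, A ∈ LinearMap.ker E₁ ↔ e * A = A * e := by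
    intro A; rw [LinearMap.mem_ker, hE₁app, sub_eq_zero]
  have memker2 : ∀ B : Matrix (Fin n) (Fin n) ℂ, B ∈ LinearMap.ker E₂ ↔ e * B + B * e = 0 := by
    intro B; rw [LinearMap.mem_ker, hE₂app]
  constructor
  · -- intersection is trivial
    ext p
    simp only [Set.mem_inter_iff, Set.mem_singleton_iff, centE, piBracketF,
      Set.mem_setOf_eq]
    constructor
    · rintro ⟨⟨hcA, hcB⟩, C, D, hCD⟩
      have hp1 : p.1 = 0 := by
        have hmem : p.1 ∈ LinearMap.ker E₁ ⊓ LinearMap.range F₁ := by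
          refine ⟨(memker1 p.1).mpr hcA, ⟨C, ?_⟩⟩
          rw [hF₁app]
          exact (congrArg Prod.fst hCD).symm
        rwa [inf1, Submodule.mem_bot] at hmem
      have hp2 : p.2 = 0 := by
        have hmem : p.2 ∈ LinearMap.ker E₂ ⊓ LinearMap.range F₂ := by
          refine ⟨(memker2 p.2).mpr hcB, ⟨D, ?_⟩⟩
          rw [hF₂app]
          exact (congrArg Prod.snd hCD).symm
        rwa [inf2, Submodule.mem_bot] at hmem
      exact Prod.ext hp1 hp2
    · rintro rfl
      refine ⟨⟨by simp, by simp⟩, 0, 0, by simp⟩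
  · -- unique decomposition
    intro p
    have hp1 : p.1 ∈ LinearMap.ker E₁ ⊔ LinearMap.range F₁ := by
      rw [sup1]; exact Submodule.mem_top
    have hp2 : p.2 ∈ LinearMap.ker E₂ ⊔ LinearMap.range F₂ := by
      rw [sup2]; exact Submodule.mem_top
    obtain ⟨a1, ha1, b1, hb1, hs1⟩ := Submodule.mem_sup.mp hp1
    obtain ⟨a2, ha2, b2, hb2, hs2⟩ := Submodule.mem_sup.mp hp2
    obtain ⟨C, hC⟩ := hb1
    obtain ⟨D, hD⟩ := hb2
    refine ⟨((a1, a2), (b1, b2)), ⟨⟨?_, ?_⟩, ⟨C, D, ?_⟩, ?_⟩, ?_⟩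
    · exact (memker1 a1).mp ha1
    · exact (memker2 a2).mp ha2
    · rw [← hC, ← hD, hF₁app, hF₂app]
    · exact Prod.ext hs1.symm hs2.symm
    · rintro ⟨⟨a1', a2'⟩, ⟨b1', b2'⟩⟩ ⟨⟨hcA, hcB⟩, ⟨C', D', hCD⟩, hsum⟩
      have hb1' : b1' ∈ LinearMap.range F₁ := by
        refine ⟨C', ?_⟩
        rw [hF₁app]
        exact (congrArg Prod.fst hCD).symm
      have hb2' : b2' ∈ LinearMap.range F₂ := by
        refine ⟨D', ?_⟩
        rw [hF₂app]
        exact (congrArg Prod.snd hCD).symm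
      have ha1' : a1' ∈ LinearMap.ker E₁ := (memker1 a1').mpr hcA
      have ha2' : a2' ∈ LinearMap.ker E₂ := (memker2 a2').mpr hcB
      have hsum1 : a1' + b1' = a1 + b1 := by
        have := congrArg Prod.fst hsum
        simp only [Prod.fst_add] at this
        rw [← this, hs1]
      have hsum2 : a2' + b2' = a2 + b2 := by
        have := congrArg Prod.snd hsum
        simp only [Prod.snd_add] at this
        rw [← this, hs2]
      obtain ⟨q1eq, q2eq⟩ := decomp_unique inf1 ha1' ha1 hb1' ⟨C, hC⟩ hsum1
      obtain ⟨q3eq, q4eq⟩ := decomp_unique inf2 ha2' ha2 hb2' ⟨D, hD⟩ hsum2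
      exact Prod.ext (Prod.ext q1eq q3eq) (Prod.ext q2eq q4eq)
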